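/- Under the Mallows model MM(σ₀,φ) with 0 < φ < 1 on S_n, for any subset A ⊆ {1,...,n} and u ∈ A, the probability that u is ranked strictly lower than its centroid position within A satisfies P[σ_A(u) > σ_{0,A}(u)] ≤ (φ+φ²+...+φ^{|A|-σ_{0,A}(u)})/(1+φ+...+φ^{|A|-σ_{0,A}(u)}) < φ. -/

import Mathlib

/-- Kendall tau distance between two permutations of `Fin n`. -/
def kendall {n : ℕ} (σ π : Equiv.Perm (Fin n)) : ℕ :=
  (Finset.univ.filter (fun p : Fin n × Fin n =>
    p.1 < p.2 ∧ ((σ p.1 < σ p.2 ∧ π p.2 < π p.1) ∨ (σ p.2 < σ p.1 ∧ π p.1 < π p.2)))).card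

/- Probability of the event `E` under the Mallows model `MM(σ₀, φ)`, in which a permutation
`σ` has probability proportional to `φ ^ d_τ(σ, σ₀)`. -/
open Classical in
noncomputable def mallowsProb {n : ℕ} (σ₀ : Equiv.Perm (Fin n)) (φ : ℝ)
    (E : Equiv.Perm (Fin n) → Prop) : ℝ :=
  (∑ σ : Equiv.Perm (Fin n), if E σ then φ ^ kendall σ σ₀ else 0) /
    (∑ σ : Equiv.Perm (Fin n), φ ^ kendall σ σ₀)

/-- The geometric sum `φ_{a:b} = φ^a + φ^{a+1} + ⋯ + φ^b` (equal to `0` if `a > b`). -/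
noncomputable def phiSum (φ : ℝ) (a b : ℕ) : ℝ := ∑ k ∈ Finset.Icc a b, φ ^ k

/-- One-based position of element `u` in the permutation `σ`. -/
def pos {n : ℕ} (σ : Equiv.Perm (Fin n)) (u : Fin n) : ℕ := (σ u : ℕ) + 1

/-- Projection rank of `x` within the subset `A` under `σ`. -/
def proj {n : ℕ} (σ : Equiv.Perm (Fin n)) (A : Finset (Fin n)) (x : Fin n) : ℕ :=
  (A.filter (fun y => σ y ≤ σ x)).card


open Finset

variable {N : ℕ}

/-- inversion count of a list w.r.t. σ₀ order; head = bottom. -/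
def linv (σ₀ : Equiv.Perm (Fin N)) : List (Fin N) → ℕ
  | [] => 0
  | v :: t => t.countP (fun x => decide (σ₀ x < σ₀ v)) + linv σ₀ t

/-- whether some element of S appears (strictly) before u. -/
def bad (u : Fin N) (S : Finset (Fin N)) : List (Fin N) → Bool
  | [] => false
  | v :: t => if v ∈ S then true else if v = u then false else bad u S t

noncomputable def osum (s : Finset (Fin N)) (g : List (Fin N) → ℝ) : ℝ :=
  if h : s = ∅ then g []
  else ∑ v ∈ s.attach, osum (s.erase v.1) (fun l => g (v.1 :: l))
termination_by s.card
decreasing_by exact Finset.card_erase_lt_of_mem v.2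

lemma osum_empty (g : List (Fin N) → ℝ) : osum ∅ g = g [] := by rw [osum]; simp

lemma osum_nonempty {s : Finset (Fin N)} (h : s.Nonempty) (g : List (Fin N) → ℝ) :
    osum s g = ∑ v ∈ s, osum (s.erase v) (fun l => g (v :: l)) := by
  rw [osum, dif_neg (Finset.nonempty_iff_ne_empty.1 h)]
  exact Finset.sum_attach s (fun v => osum (s.erase v) (fun l => g (v :: l)))

lemma osum_congr {s : Finset (Fin N)} {g g' : List (Fin N) → ℝ}
    (h : ∀ l : List (Fin N), l.Nodup → l.toFinset = s → g l = g' l) :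
    osum s g = osum s g' := by
  induction s using Finset.strongInduction generalizing g g' with
  | _ s ih =>
    rcases eq_or_ne s ∅ with rfl | hne
    · rw [osum_empty, osum_empty]; exact h [] List.nodup_nil rfl
    · have hne' : s.Nonempty := Finset.nonempty_iff_ne_empty.2 hne
      rw [osum_nonempty hne', osum_nonempty hne']
      refine Finset.sum_congr rfl fun v hv => ?_
      refine ih _ (Finset.erase_ssubset hv) fun l hl hls => h (v :: l) ?_ ?_
      · refine List.nodup_cons.2 ⟨fun hx => ?_, hl⟩
        have : v ∈ s.erase v := hls ▸ List.mem_toFinset.2 hx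
        simp at this
      · rw [List.toFinset_cons, hls, Finset.insert_erase hv]

lemma osum_mul {s : Finset (Fin N)} (a : ℝ) (g : List (Fin N) → ℝ) :
    osum s (fun l => a * g l) = a * osum s g := by
  induction s using Finset.strongInduction generalizing g with
  | _ s ih =>
    rcases eq_or_ne s ∅ with rfl | hne
    · rw [osum_empty, osum_empty]
    · have hne' : s.Nonempty := Finset.nonempty_iff_ne_empty.2 hne
      rw [osum_nonempty hne', osum_nonempty hne', Finset.mul_sum]
      exact Finset.sum_congr rfl fun v hv => ih _ (Finset.erase_ssubset hv) _

lemma osum_nonneg {s : Finset (Fin N)} {g : List (Fin N) → ℝ} (h : ∀ l, 0 ≤ g l) :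
    0 ≤ osum s g := by
  induction s using Finset.strongInduction generalizing g with
  | _ s ih =>
    rcases eq_or_ne s ∅ with rfl | hne
    · rw [osum_empty]; exact h []
    · rw [osum_nonempty (Finset.nonempty_iff_ne_empty.2 hne)]
      exact Finset.sum_nonneg fun v hv => ih _ (Finset.erase_ssubset hv) (fun l => h _)

lemma countP_eq_filter_card {l : List (Fin N)} {p : Fin N → Prop} [DecidablePred p]
    (hl : l.Nodup) {t : Finset (Fin N)} (ht : l.toFinset = t) :
    l.countP (fun x => decide (p x)) = (t.filter p).card := by
  subst ht
  rw [List.countP_eq_length_filter]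
  have h1 : (l.filter (fun x => decide (p x))).toFinset = l.toFinset.filter p := by
    simp [List.toFinset_filter]
  rw [← h1, List.toFinset_card_of_nodup (hl.filter _)]

lemma linv_cons {σ₀ : Equiv.Perm (Fin N)} {l : List (Fin N)} (hl : l.Nodup)
    {t : Finset (Fin N)} (ht : l.toFinset = t) (v : Fin N) :
    linv σ₀ (v :: l) = (t.filter (fun x => σ₀ x < σ₀ v)).card + linv σ₀ l := by
  show l.countP _ + linv σ₀ l = _
  rw [countP_eq_filter_card hl ht]

/-- the "rank weight" of v in s : number of elements of s.erase v that are σ₀-below v. -/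
def cwt (σ₀ : Equiv.Perm (Fin N)) (s : Finset (Fin N)) (v : Fin N) : ℕ :=
  ((s.erase v).filter (fun x => σ₀ x < σ₀ v)).card

lemma osum_cons_weight (σ₀ : Equiv.Perm (Fin N)) (φ : ℝ) (s : Finset (Fin N)) (v : Fin N) :
    osum (s.erase v) (fun l => (φ : ℝ) ^ linv σ₀ (v :: l)) =
      φ ^ cwt σ₀ s v * osum (s.erase v) (fun l => φ ^ linv σ₀ l) := by
  rw [← osum_mul]
  refine osum_congr fun l hl hls => ?_
  rw [linv_cons hl hls v, pow_add, cwt]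

noncomputable def Zval (φ : ℝ) : ℕ → ℝ
  | 0 => 1
  | (m+1) => (∑ k ∈ Finset.range (m+1), φ ^ k) * Zval φ m

lemma Zval_pos {φ : ℝ} (hφ : 0 < φ) : ∀ m, 0 < Zval φ m
  | 0 => one_pos
  | (m+1) => mul_pos (Finset.sum_pos (fun k _ => pow_pos hφ k) ⟨0, by simp⟩) (Zval_pos hφ m)

/-- the rank map v ↦ cwt is injective on s and has image range (s.card). -/
lemma cwt_strict_mono {σ₀ : Equiv.Perm (Fin N)} {s : Finset (Fin N)} {v w : Fin N}
    (hv : v ∈ s) (hw : w ∈ s) (hvw : σ₀ v < σ₀ w) : cwt σ₀ s v < cwt σ₀ s w := by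
  apply Finset.card_lt_card
  constructor
  · intro x hx
    simp only [Finset.mem_filter, Finset.mem_erase] at hx ⊢
    refine ⟨⟨fun hxw => ?_, hx.1.2⟩, hx.2.trans hvw⟩
    subst hxw; exact absurd (hx.2.trans hvw) (lt_irrefl _)
  · intro hsub
    have : v ∈ (s.erase w).filter (fun x => σ₀ x < σ₀ w) := by
      simp only [Finset.mem_filter, Finset.mem_erase]
      exact ⟨⟨fun h => by subst h; exact absurd hvw (lt_irrefl _), hv⟩, hvw⟩
    have := hsub this
    simp only [Finset.mem_filter, Finset.mem_erase] at this
    exact absurd this.2 (lt_irrefl _)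

lemma cwt_injOn {σ₀ : Equiv.Perm (Fin N)} {s : Finset (Fin N)} :
    ∀ v ∈ s, ∀ w ∈ s, cwt σ₀ s v = cwt σ₀ s w → v = w := by
  intro v hv w hw h
  rcases lt_trichotomy (σ₀ v) (σ₀ w) with hlt | heq | hgt
  · exact absurd h (Nat.ne_of_lt (cwt_strict_mono hv hw hlt))
  · exact σ₀.injective heq
  · exact absurd h.symm (Nat.ne_of_lt (cwt_strict_mono hw hv hgt))

lemma cwt_image {σ₀ : Equiv.Perm (Fin N)} {s : Finset (Fin N)} :
    s.image (cwt σ₀ s) = Finset.range s.card := by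
  apply Finset.eq_of_subset_of_card_le
  · intro k hk
    simp only [Finset.mem_image] at hk
    obtain ⟨v, hv, rfl⟩ := hk
    rw [Finset.mem_range]
    calc cwt σ₀ s v ≤ (s.erase v).card := Finset.card_filter_le _ _
      _ < s.card := Finset.card_erase_lt_of_mem hv
  · rw [Finset.card_range, Finset.card_image_of_injOn cwt_injOn]

lemma sum_cwt {σ₀ : Equiv.Perm (Fin N)} {s : Finset (Fin N)} (φ : ℝ) :
    ∑ v ∈ s, φ ^ cwt σ₀ s v = ∑ k ∈ Finset.range s.card, φ ^ k := by
  rw [← cwt_image (σ₀ := σ₀) (s := s), Finset.sum_image cwt_injOn]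

lemma Z_eq (σ₀ : Equiv.Perm (Fin N)) (φ : ℝ) (s : Finset (Fin N)) :
    osum s (fun l => φ ^ linv σ₀ l) = Zval φ s.card := by
  induction s using Finset.strongInduction with
  | _ s ih =>
    rcases eq_or_ne s ∅ with rfl | hne
    · rw [osum_empty]; simp [Zval, linv]
    · have hne' : s.Nonempty := Finset.nonempty_iff_ne_empty.2 hne
      rw [osum_nonempty hne']
      have hcard : ∀ v ∈ s, (s.erase v).card = s.card - 1 :=
        fun v hv => Finset.card_erase_of_mem hv
      have : ∀ v ∈ s, osum (s.erase v) (fun l => φ ^ linv σ₀ (v :: l)) =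
          φ ^ cwt σ₀ s v * Zval φ (s.card - 1) := by
        intro v hv
        rw [osum_cons_weight, ih _ (Finset.erase_ssubset hv), hcard v hv]
      rw [Finset.sum_congr rfl this, ← Finset.sum_mul, sum_cwt]
      obtain ⟨m, hm⟩ : ∃ m, s.card = m + 1 :=
        ⟨s.card - 1, (Nat.succ_pred_eq_of_pos (Finset.card_pos.2 hne')).symm⟩
      rw [hm]
      simp [Zval]

lemma osum_zero (s : Finset (Fin N)) : osum s (fun _ => (0:ℝ)) = 0 := by
  have := osum_mul (s := s) 0 (fun _ => (1:ℝ))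
  simpa using this

lemma cwt_eq_filter_card (σ₀ : Equiv.Perm (Fin N)) (S : Finset (Fin N)) (v : Fin N) :
    cwt σ₀ S v = (S.filter (fun x => σ₀ x < σ₀ v)).card := by
  unfold cwt
  congr 1
  ext x
  simp only [Finset.mem_filter, Finset.mem_erase]
  constructor
  · rintro ⟨⟨-, hx⟩, h⟩; exact ⟨hx, h⟩
  · rintro ⟨hx, h⟩; exact ⟨⟨fun he => by subst he; exact absurd h (lt_irrefl _), hx⟩, h⟩

lemma phiSum_one_eq (φ : ℝ) (b : ℕ) :
    phiSum φ 1 b = φ * ∑ k ∈ Finset.range b, φ ^ k := by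
  rw [phiSum, ← Finset.Ico_add_one_right_eq_Icc, Finset.sum_Ico_eq_sum_range]
  simp [Finset.mul_sum, pow_succ, pow_add, mul_comm]

lemma phiSum_zero_eq (φ : ℝ) (b : ℕ) :
    phiSum φ 0 b = ∑ k ∈ Finset.range (b+1), φ ^ k := by
  rw [phiSum, ← Finset.Ico_add_one_right_eq_Icc, Finset.range_eq_Ico]

lemma phiSum_nonneg {φ : ℝ} (hφ : 0 ≤ φ) (a b : ℕ) : 0 ≤ phiSum φ a b :=
  Finset.sum_nonneg fun k _ => pow_nonneg hφ k

/-- simp facts for bad -/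
lemma bad_cons_mem {u v : Fin N} {S : Finset (Fin N)} (h : v ∈ S) (l : List (Fin N)) :
    bad u S (v :: l) = true := by simp [bad, h]

lemma bad_cons_self {u : Fin N} {S : Finset (Fin N)} (h : u ∉ S) (l : List (Fin N)) :
    bad u S (u :: l) = false := by simp [bad, h]

lemma bad_cons_other {u v : Fin N} {S : Finset (Fin N)} (h1 : v ∉ S) (h2 : v ≠ u)
    (l : List (Fin N)) : bad u S (v :: l) = bad u S l := by simp [bad, h1, h2]

lemma core (σ₀ : Equiv.Perm (Fin N)) {φ : ℝ} (hφ0 : 0 < φ) (hφ1 : φ ≤ 1) :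
    ∀ s : Finset (Fin N), ∀ u ∈ s, ∀ S ⊆ s, u ∉ S → (∀ y ∈ S, σ₀ u < σ₀ y) →
    osum s (fun l => if bad u S l then φ ^ linv σ₀ l else 0) ≤
      phiSum φ 1 S.card * osum s (fun l => if bad u S l then 0 else φ ^ linv σ₀ l) := by
  intro s
  induction s using Finset.strongInduction with
  | _ s ih =>
    intro u hu S hSs huS hord
    have hne : s.Nonempty := ⟨u, hu⟩
    have hZ0 : (0:ℝ) ≤ Zval φ (s.card - 1) := (Zval_pos hφ0 _).le
    have hphi1b : (0:ℝ) ≤ phiSum φ 1 S.card := phiSum_nonneg hφ0.le _ _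
    set b := S.card with hb
    set Z : ℝ := Zval φ (s.card - 1) with hZ
    set fL : Fin N → ℝ := fun v =>
      osum (s.erase v) (fun l => if bad u S (v :: l) then φ ^ linv σ₀ (v :: l) else 0) with hfL
    set fK : Fin N → ℝ := fun v =>
      osum (s.erase v) (fun l => if bad u S (v :: l) then 0 else φ ^ linv σ₀ (v :: l)) with hfK
    rw [osum_nonempty hne, osum_nonempty hne]
    show ∑ v ∈ s, fL v ≤ phiSum φ 1 b * ∑ v ∈ s, fK v
    -- branch evaluations
    have hLS : ∀ v ∈ S, fL v = φ ^ cwt σ₀ s v * Z := by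
      intro v hv
      simp only [hfL]
      have : osum (s.erase v) (fun l => if bad u S (v :: l) then φ ^ linv σ₀ (v :: l) else 0)
          = osum (s.erase v) (fun l => φ ^ linv σ₀ (v :: l)) :=
        osum_congr fun l _ _ => by rw [bad_cons_mem hv, if_pos rfl]
      rw [this, osum_cons_weight, Z_eq, Finset.card_erase_of_mem (hSs hv)]
    have hKS : ∀ v ∈ S, fK v = 0 := by
      intro v hv
      simp only [hfK]
      have : osum (s.erase v) (fun l => if bad u S (v :: l) then 0 else φ ^ linv σ₀ (v :: l))
          = osum (s.erase v) (fun _ => (0:ℝ)) :=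
        osum_congr fun l _ _ => by rw [bad_cons_mem hv, if_pos rfl]
      rw [this, osum_zero]
    have hLu : fL u = 0 := by
      simp only [hfL]
      have : osum (s.erase u) (fun l => if bad u S (u :: l) then φ ^ linv σ₀ (u :: l) else 0)
          = osum (s.erase u) (fun _ => (0:ℝ)) :=
        osum_congr fun l _ _ => by rw [bad_cons_self huS]; simp
      rw [this, osum_zero]
    have hKu : fK u = φ ^ cwt σ₀ s u * Z := by
      simp only [hfK]
      have : osum (s.erase u) (fun l => if bad u S (u :: l) then 0 else φ ^ linv σ₀ (u :: l))
          = osum (s.erase u) (fun l => φ ^ linv σ₀ (u :: l)) :=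
        osum_congr fun l _ _ => by rw [bad_cons_self huS]; simp
      rw [this, osum_cons_weight, Z_eq, Finset.card_erase_of_mem hu]
    have hrest : ∀ v ∈ s, v ∉ S → v ≠ u → fL v ≤ phiSum φ 1 b * fK v := by
      intro v hv hvS hvu
      have e1 : fL v = φ ^ cwt σ₀ s v *
          osum (s.erase v) (fun l => if bad u S l then φ ^ linv σ₀ l else 0) := by
        simp only [hfL]; rw [← osum_mul]
        refine osum_congr fun l hl hls => ?_
        rw [bad_cons_other hvS hvu]
        by_cases hbl : bad u S l
        · rw [if_pos hbl, if_pos hbl, linv_cons hl hls, pow_add, cwt]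
        · rw [if_neg hbl, if_neg hbl, mul_zero]
      have e2 : fK v = φ ^ cwt σ₀ s v *
          osum (s.erase v) (fun l => if bad u S l then 0 else φ ^ linv σ₀ l) := by
        simp only [hfK]; rw [← osum_mul]
        refine osum_congr fun l hl hls => ?_
        rw [bad_cons_other hvS hvu]
        by_cases hbl : bad u S l
        · rw [if_pos hbl, if_pos hbl, mul_zero]
        · rw [if_neg hbl, if_neg hbl, linv_cons hl hls, pow_add, cwt]
      have hIH := ih _ (Finset.erase_ssubset hv) u (Finset.mem_erase.2 ⟨Ne.symm hvu, hu⟩)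
        S (fun y hy => Finset.mem_erase.2 ⟨fun he => hvS (he ▸ hy), hSs hy⟩) huS hord
      rw [e1, e2]
      calc φ ^ cwt σ₀ s v * osum (s.erase v) (fun l => if bad u S l then φ ^ linv σ₀ l else 0)
          ≤ φ ^ cwt σ₀ s v * (phiSum φ 1 b *
            osum (s.erase v) (fun l => if bad u S l then 0 else φ ^ linv σ₀ l)) :=
            mul_le_mul_of_nonneg_left hIH (pow_nonneg hφ0.le _)
        _ = phiSum φ 1 b * (φ ^ cwt σ₀ s v *
            osum (s.erase v) (fun l => if bad u S l then 0 else φ ^ linv σ₀ l)) := by ring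
    -- the key inequality
    have hkeyexp : ∀ v ∈ S, cwt σ₀ s u + 1 + cwt σ₀ S v ≤ cwt σ₀ s v := by
      intro v hv
      have huv : σ₀ u < σ₀ v := hord v hv
      set A' := (s.erase u).filter (fun x => σ₀ x < σ₀ u) with hA'
      set B' := S.filter (fun x => σ₀ x < σ₀ v) with hB'
      have hsub : insert u (A' ∪ B') ⊆ (s.erase v).filter (fun x => σ₀ x < σ₀ v) := by
        intro x hx
        rcases Finset.mem_insert.1 hx with rfl | hx'
        · exact Finset.mem_filter.2 ⟨Finset.mem_erase.2 ⟨fun he => huS (he ▸ hv), hu⟩, huv⟩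
        · rcases Finset.mem_union.1 hx' with hxa | hxb
          · obtain ⟨hx1, hx2⟩ := Finset.mem_filter.1 hxa
            have hxv : σ₀ x < σ₀ v := hx2.trans huv
            exact Finset.mem_filter.2 ⟨Finset.mem_erase.2
              ⟨fun he => absurd (he ▸ hxv) (lt_irrefl _), (Finset.mem_erase.1 hx1).2⟩, hxv⟩
          · obtain ⟨hx1, hx2⟩ := Finset.mem_filter.1 hxb
            exact Finset.mem_filter.2 ⟨Finset.mem_erase.2
              ⟨fun he => absurd (he ▸ hx2) (lt_irrefl _), hSs hx1⟩, hx2⟩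
      have hdisjAB : Disjoint A' B' := by
        rw [Finset.disjoint_left]
        intro x hxa hxb
        exact absurd ((Finset.mem_filter.1 hxa).2.trans (hord x (Finset.mem_filter.1 hxb).1))
          (lt_irrefl _)
      have huAB : u ∉ A' ∪ B' := by
        rw [Finset.mem_union]
        rintro (h | h)
        · exact absurd (Finset.mem_filter.1 h).1 (Finset.notMem_erase u s)
        · exact huS (Finset.mem_filter.1 h).1
      have hcard := Finset.card_le_card hsub
      rw [Finset.card_insert_of_notMem huAB, Finset.card_union_of_disjoint hdisjAB] at hcard
      have e1 : cwt σ₀ s u = A'.card := rfl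
      have e2 : cwt σ₀ S v = B'.card := cwt_eq_filter_card σ₀ S v
      have e3 : cwt σ₀ s v = ((s.erase v).filter (fun x => σ₀ x < σ₀ v)).card := rfl
      omega
    have hkey2 : ∑ v ∈ S, φ ^ cwt σ₀ s v ≤ phiSum φ 1 b * φ ^ cwt σ₀ s u := by
      calc ∑ v ∈ S, φ ^ cwt σ₀ s v
          ≤ ∑ v ∈ S, φ ^ (cwt σ₀ s u + 1 + cwt σ₀ S v) :=
            Finset.sum_le_sum fun v hv =>
              pow_le_pow_of_le_one hφ0.le hφ1 (hkeyexp v hv)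
        _ = φ ^ cwt σ₀ s u * φ * ∑ v ∈ S, φ ^ cwt σ₀ S v := by
            rw [Finset.mul_sum]
            exact Finset.sum_congr rfl fun v hv => by rw [pow_add, pow_add, pow_one]
        _ = φ ^ cwt σ₀ s u * (φ * ∑ k ∈ Finset.range b, φ ^ k) := by
            rw [sum_cwt]; ring
        _ = phiSum φ 1 b * φ ^ cwt σ₀ s u := by rw [phiSum_one_eq]; ring
    -- assembly
    have hSsub : S ⊆ s.erase u := fun y hy =>
      Finset.mem_erase.2 ⟨fun he => huS (he ▸ hy), hSs hy⟩
    set rest := (s.erase u) \ S with hrest'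
    have hsplit : s.erase u = S ∪ rest := (Finset.union_sdiff_of_subset hSsub).symm
    have hdisj : Disjoint S rest := Finset.disjoint_sdiff
    have hrmem : ∀ v ∈ rest, v ∈ s ∧ v ∉ S ∧ v ≠ u := by
      intro v hv
      obtain ⟨hv1, hv2⟩ := Finset.mem_sdiff.1 hv
      exact ⟨(Finset.mem_erase.1 hv1).2, hv2, (Finset.mem_erase.1 hv1).1⟩
    have expandL : ∑ v ∈ s, fL v = ∑ v ∈ S, fL v + ∑ v ∈ rest, fL v := by
      rw [← Finset.sum_union hdisj, ← hsplit, ← Finset.add_sum_erase s fL hu, hLu, zero_add]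
    have expandK : ∑ v ∈ s, fK v = φ ^ cwt σ₀ s u * Z + ∑ v ∈ rest, fK v := by
      rw [← Finset.add_sum_erase s fK hu, hKu, hsplit, Finset.sum_union hdisj,
        Finset.sum_congr rfl hKS]
      simp
    rw [expandL, expandK, mul_add]
    have h1 : ∑ v ∈ S, fL v ≤ phiSum φ 1 b * (φ ^ cwt σ₀ s u * Z) := by
      rw [Finset.sum_congr rfl hLS, ← Finset.sum_mul]
      calc (∑ v ∈ S, φ ^ cwt σ₀ s v) * Z ≤ (phiSum φ 1 b * φ ^ cwt σ₀ s u) * Z :=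
            mul_le_mul_of_nonneg_right hkey2 hZ0
        _ = phiSum φ 1 b * (φ ^ cwt σ₀ s u * Z) := by ring
    have h2 : ∑ v ∈ rest, fL v ≤ phiSum φ 1 b * ∑ v ∈ rest, fK v := by
      rw [Finset.mul_sum]
      exact Finset.sum_le_sum fun v hv => by
        obtain ⟨h1', h2', h3'⟩ := hrmem v hv; exact hrest v h1' h2' h3'
    exact add_le_add h1 h2

lemma osum_map_emb : ∀ (k : ℕ) (ι : Fin k ↪ Fin N) (g : List (Fin N) → ℝ),
    osum (Finset.univ.map ι) g = ∑ e : Equiv.Perm (Fin k), g (List.ofFn (fun i => ι (e i))) := by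
  intro k
  induction k with
  | zero =>
    intro ι g
    rw [show (Finset.univ.map ι) = ∅ from by simp, osum_empty]
    have h1 : ∀ e : Equiv.Perm (Fin 0), g (List.ofFn (fun i => ι (e i))) = g [] := by
      intro e; congr 1
    rw [Finset.sum_congr rfl (fun e _ => h1 e), Finset.sum_const]
    have : Fintype.card (Equiv.Perm (Fin 0)) = 1 := by simp
    rw [Finset.card_univ, this, one_smul]
  | succ k IH =>
    intro ι g
    have hne : (Finset.univ.map ι).Nonempty := ⟨ι 0, by simp⟩
    rw [osum_nonempty hne, Finset.sum_map,
      ← Equiv.sum_comp (Equiv.Perm.decomposeFin.symm)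
        (fun e => g (List.ofFn (fun i => ι (e i)))), Fintype.sum_prod_type]
    refine Finset.sum_congr rfl fun p _ => ?_
    have hι' : Function.Injective (fun i : Fin k => ι (Equiv.swap 0 p i.succ)) := by
      intro a b h
      exact Fin.succ_injective _ ((Equiv.swap 0 p).injective (ι.injective h))
    set ι' : Fin k ↪ Fin (N) := ⟨fun i => ι (Equiv.swap 0 p i.succ), hι'⟩ with hι'def
    have himg : Finset.univ.map ι' = (Finset.univ.map ι).erase (ι p) := by
      apply Finset.eq_of_subset_of_card_le
      · intro x hx
        obtain ⟨i, -, rfl⟩ := Finset.mem_map.1 hx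
        refine Finset.mem_erase.2 ⟨fun h => ?_, by simp [hι'def]⟩
        have h2 : Equiv.swap 0 p i.succ = Equiv.swap 0 p 0 := by
          rw [Equiv.swap_apply_left]; exact ι.injective h
        exact Fin.succ_ne_zero i ((Equiv.swap 0 p).injective h2)
      · rw [Finset.card_erase_of_mem (by simp), Finset.card_map, Finset.card_map,
          Finset.card_univ, Finset.card_univ, Fintype.card_fin, Fintype.card_fin]
        omega
    calc osum ((Finset.univ.map ι).erase (ι p)) (fun l => g (ι p :: l))
        = osum (Finset.univ.map ι') (fun l => g (ι p :: l)) := by rw [himg]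
      _ = ∑ e' : Equiv.Perm (Fin k), g (ι p :: List.ofFn fun i => ι' (e' i)) := IH ι' _
      _ = ∑ e' : Equiv.Perm (Fin k),
            g (List.ofFn fun i => ι ((Equiv.Perm.decomposeFin.symm (p, e')) i)) := by
          refine Finset.sum_congr rfl fun e' _ => ?_
          congr 1
          rw [List.ofFn_succ]
          simp [hι'def]

lemma osum_univ (g : List (Fin N) → ℝ) :
    osum Finset.univ g = ∑ e : Equiv.Perm (Fin N), g (List.ofFn (fun i => e i)) := by
  have := osum_map_emb N (Function.Embedding.refl (Fin N)) g
  simpa using this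

lemma countP_ofFn : ∀ {m : ℕ} (f : Fin m → Fin N) (p : Fin N → Bool),
    (List.ofFn f).countP p = ∑ i : Fin m, (if p (f i) then 1 else 0) := by
  intro m
  induction m with
  | zero => intro f p; simp
  | succ m IH =>
    intro f p
    rw [List.ofFn_succ, List.countP_cons, Fin.sum_univ_succ, IH]
    omega

lemma linv_ofFn (σ₀ : Equiv.Perm (Fin N)) : ∀ {m : ℕ} (f : Fin m → Fin N),
    linv σ₀ (List.ofFn f) =
      ∑ i : Fin m, ∑ j : Fin m, (if i < j ∧ σ₀ (f j) < σ₀ (f i) then 1 else 0) := by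
  intro m
  induction m with
  | zero => intro f; simp [linv]
  | succ m IH =>
    intro f
    rw [List.ofFn_succ]
    show (List.ofFn fun i => f i.succ).countP _ + linv σ₀ _ = _
    rw [countP_ofFn, IH]
    rw [Fin.sum_univ_succ (f := fun i => ∑ j, if i < j ∧ σ₀ (f j) < σ₀ (f i) then 1 else 0)]
    have h0 : ∑ j, (if (0 : Fin (m+1)) < j ∧ σ₀ (f j) < σ₀ (f 0) then 1 else 0) =
        ∑ i : Fin m, (if decide (σ₀ (f i.succ) < σ₀ (f 0)) then 1 else 0) := by
      rw [Fin.sum_univ_succ]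
      simp [Fin.succ_pos]
    have h1 : ∀ i : Fin m,
        (∑ j, if i.succ < j ∧ σ₀ (f j) < σ₀ (f i.succ) then 1 else 0) =
        ∑ j : Fin m, (if i < j ∧ σ₀ (f j.succ) < σ₀ (f i.succ) then 1 else 0) := by
      intro i
      rw [Fin.sum_univ_succ]
      simp [Fin.succ_lt_succ_iff]
    rw [h0, Finset.sum_congr rfl (fun i _ => h1 i)]


lemma kendall_eq_linv (σ σ₀ : Equiv.Perm (Fin N)) :
    kendall σ σ₀ = linv σ₀ (List.ofFn (fun i => σ.symm i)) := by
  have hQ : linv σ₀ (List.ofFn fun i => σ.symm i) =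
      ((Finset.univ : Finset (Fin N × Fin N)).filter fun q =>
        q.1 < q.2 ∧ σ₀ (σ.symm q.2) < σ₀ (σ.symm q.1)).card := by
    rw [linv_ofFn, Finset.card_filter, Fintype.sum_prod_type]
  rw [hQ, kendall]
  apply Finset.card_nbij'
    (i := fun p => if σ p.1 < σ p.2 then (σ p.1, σ p.2) else (σ p.2, σ p.1))
    (j := fun q => if σ.symm q.1 < σ.symm q.2 then (σ.symm q.1, σ.symm q.2)
      else (σ.symm q.2, σ.symm q.1))
  · intro p hp
    simp only [Finset.mem_coe, Finset.mem_filter, Finset.mem_univ, true_and] at hp ⊢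
    obtain ⟨h12, hd⟩ := hp
    rcases hd with ⟨h1, h2⟩ | ⟨h1, h2⟩
    · rw [if_pos h1]; simpa using ⟨h1, h2⟩
    · rw [if_neg (asymm h1)]; simpa using ⟨h1, h2⟩
  · intro q hq
    simp only [Finset.mem_coe, Finset.mem_filter, Finset.mem_univ, true_and] at hq ⊢
    obtain ⟨h12, h2⟩ := hq
    have hne : σ.symm q.1 ≠ σ.symm q.2 := fun h => (ne_of_lt h12) (by
      have := congrArg σ h; simpa using this)
    rcases lt_or_gt_of_ne hne with hlt | hgt
    · rw [if_pos hlt]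
      refine ⟨hlt, Or.inl ?_⟩
      simpa using ⟨h12, h2⟩
    · rw [if_neg (asymm hgt)]
      refine ⟨hgt, Or.inr ?_⟩
      simpa using ⟨h12, h2⟩
  · intro p hp
    simp only [Finset.mem_coe, Finset.mem_filter, Finset.mem_univ, true_and] at hp
    obtain ⟨h12, hd⟩ := hp
    rcases hd with ⟨h1, h2⟩ | ⟨h1, h2⟩
    · dsimp only; rw [if_pos h1]; simp [h12]
    · dsimp only; rw [if_neg (asymm h1)]; simp [asymm h12, h12]
  · intro q hq
    simp only [Finset.mem_coe, Finset.mem_filter, Finset.mem_univ, true_and] at hq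
    obtain ⟨h12, h2⟩ := hq
    have hne : σ.symm q.1 ≠ σ.symm q.2 := fun h => (ne_of_lt h12) (by
      have := congrArg σ h; simpa using this)
    rcases lt_or_gt_of_ne hne with hlt | hgt
    · dsimp only; rw [if_pos hlt]; simp [h12]
    · dsimp only; rw [if_neg (asymm hgt)]; simp [asymm h12, h12]


lemma indexOf_ofFn : ∀ {m : ℕ} (f : Fin m → Fin N), Function.Injective f →
    ∀ i : Fin m, List.idxOf (f i) (List.ofFn f) = (i : ℕ) := by
  intro m
  induction m with
  | zero => intro f _ i; exact i.elim0
  | succ m IH =>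
    intro f hf i
    induction i using Fin.cases with
    | zero => rw [List.ofFn_succ]; exact List.idxOf_cons_self
    | succ j =>
      rw [List.ofFn_succ, List.idxOf_cons_ne _ (fun h => Fin.succ_ne_zero j (hf h).symm)]
      rw [IH (fun i => f i.succ) (fun a b h => Fin.succ_injective _ (hf h)) j]
      simp

lemma bad_iff {u : Fin N} {S : Finset (Fin N)} (huS : u ∉ S) :
    ∀ l : List (Fin N), u ∈ l → (∀ y ∈ S, y ∈ l) →
    (bad u S l = true ↔ ∃ y ∈ S, List.idxOf y l < List.idxOf u l) := by
  intro l
  induction l with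
  | nil => intro hu; exact absurd hu List.not_mem_nil
  | cons v t IH =>
    intro hu hSt
    by_cases hvS : v ∈ S
    · rw [bad_cons_mem hvS]
      refine iff_of_true rfl ⟨v, hvS, ?_⟩
      rw [List.idxOf_cons_self, List.idxOf_cons_ne _ (fun h : v = u => huS (h ▸ hvS))]
      exact Nat.succ_pos _
    · by_cases hvu : v = u
      · rw [hvu]
        rw [bad_cons_self huS]
        refine iff_of_false (by simp) ?_
        rintro ⟨y, hy, hlt⟩
        rw [List.idxOf_cons_self,
          List.idxOf_cons_ne _ (fun h : u = y => huS (h.symm ▸ hy))] at hlt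
        exact absurd hlt (Nat.not_lt_zero _)
      · rw [bad_cons_other hvS hvu]
        have hut : u ∈ t := by
          rcases List.mem_cons.1 hu with h | h
          · exact absurd h.symm hvu
          · exact h
        have hSt' : ∀ y ∈ S, y ∈ t := by
          intro y hy
          rcases List.mem_cons.1 (hSt y hy) with h | h
          · exact absurd (h ▸ hy) hvS
          · exact h
        rw [IH hut hSt']
        constructor
        · rintro ⟨y, hy, hlt⟩
          refine ⟨y, hy, ?_⟩
          rw [List.idxOf_cons_ne _ (fun h : v = y => hvS (h ▸ hy)),
            List.idxOf_cons_ne _ (fun h : v = u => hvu h)]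
          exact Nat.succ_lt_succ hlt
        · rintro ⟨y, hy, hlt⟩
          refine ⟨y, hy, ?_⟩
          rw [List.idxOf_cons_ne _ (fun h : v = y => hvS (h ▸ hy)),
            List.idxOf_cons_ne _ (fun h : v = u => hvu h)] at hlt
          exact Nat.lt_of_succ_lt_succ hlt

lemma bad_ofFn_iff (σ : Equiv.Perm (Fin N)) {u : Fin N} {S : Finset (Fin N)} (huS : u ∉ S) :
    (bad u S (List.ofFn (fun i => σ.symm i)) = true ↔ ∃ y ∈ S, σ y < σ u) := by
  have hmem : ∀ x : Fin N, x ∈ List.ofFn (fun i => σ.symm i) := fun x =>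
    List.mem_ofFn.2 ⟨σ x, by simp⟩
  have hidx : ∀ x : Fin N, List.idxOf x (List.ofFn (fun i => σ.symm i)) = (σ x : ℕ) := by
    intro x
    have := indexOf_ofFn (fun i => σ.symm i) (fun a b h => σ.symm.injective h) (σ x)
    simpa using this
  rw [bad_iff huS _ (hmem u) (fun y _ => hmem y)]
  refine exists_congr fun y => and_congr_right fun _ => ?_
  rw [hidx, hidx, Fin.lt_def]

lemma event_imp (σ σ₀ : Equiv.Perm (Fin N)) (A : Finset (Fin N)) (u : Fin N)
    (h : proj σ A u > proj σ₀ A u) :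
    ∃ y ∈ A.filter (fun y => σ₀ u < σ₀ y), σ y < σ u := by
  by_contra hc
  push_neg at hc
  apply absurd h
  push_neg
  apply Finset.card_le_card
  intro y hy
  obtain ⟨hyA, hyle⟩ := Finset.mem_filter.1 hy
  refine Finset.mem_filter.2 ⟨hyA, ?_⟩
  by_contra hnot
  push_neg at hnot
  have hyS : y ∈ A.filter (fun y => σ₀ u < σ₀ y) := Finset.mem_filter.2 ⟨hyA, hnot⟩
  have := hc y hyS
  have hyu : y ≠ u := fun he => absurd (he ▸ hnot) (lt_irrefl _)
  have : σ y = σ u := le_antisymm hyle this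
  exact hyu (σ.injective this)


lemma phiSum_zero_split (φ : ℝ) (b : ℕ) : phiSum φ 0 b = 1 + phiSum φ 1 b := by
  rw [phiSum_zero_eq, phiSum_one_eq, Finset.sum_range_succ', Finset.mul_sum]
  rw [Finset.sum_congr rfl (fun i (_ : i ∈ Finset.range b) => pow_succ' φ i)]
  rw [pow_zero, add_comm]

lemma phiSum_zero_pos {φ : ℝ} (hφ0 : 0 < φ) (b : ℕ) : 0 < phiSum φ 0 b := by
  rw [phiSum_zero_eq]
  exact Finset.sum_pos (fun k _ => pow_pos hφ0 k) ⟨0, Finset.mem_range.2 (Nat.succ_pos b)⟩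

lemma phiSum_lt_mul {φ : ℝ} (hφ0 : 0 < φ) (b : ℕ) : phiSum φ 1 b < φ * phiSum φ 0 b := by
  rw [phiSum_zero_eq, Finset.sum_range_succ, mul_add, phiSum_one_eq]
  have h1 : 0 < φ * φ ^ b := mul_pos hφ0 (pow_pos hφ0 b)
  linarith

/-- Lemma 4.5, part 1): under `MM(σ₀,φ)` with `0 < φ < 1`, for `A ⊆ [n]` and `u ∈ A`,
`P[σ_A(u) > σ_{0,A}(u)] ≤ φ_{1:|A|-σ_{0,A}(u)} / φ_{0:|A|-σ_{0,A}(u)} < φ`. -/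
theorem mallows_proj_above {n : ℕ} (σ₀ : Equiv.Perm (Fin n)) (φ : ℝ)
    (hφ0 : 0 < φ) (hφ1 : φ < 1) (A : Finset (Fin n)) (u : Fin n) (hu : u ∈ A) :
    mallowsProb σ₀ φ (fun σ => proj σ A u > proj σ₀ A u) ≤
      phiSum φ 1 (A.card - proj σ₀ A u) / phiSum φ 0 (A.card - proj σ₀ A u) ∧
    phiSum φ 1 (A.card - proj σ₀ A u) / phiSum φ 0 (A.card - proj σ₀ A u) < φ := by
  classical
  set S := A.filter (fun y => σ₀ u < σ₀ y) with hSdef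
  have huS : u ∉ S := by simp [hSdef]
  have hord : ∀ y ∈ S, σ₀ u < σ₀ y := fun y hy => (Finset.mem_filter.1 hy).2
  have hbcard : S.card = A.card - proj σ₀ A u := by
    have hsplit := Finset.card_filter_add_card_filter_not
      (s := A) (p := fun y => σ₀ y ≤ σ₀ u)
    have hfe : A.filter (fun y => ¬ (σ₀ y ≤ σ₀ u)) = S := by
      rw [hSdef]
      exact Finset.filter_congr (fun y _ => by rw [not_le])
    rw [hfe] at hsplit
    have : proj σ₀ A u = (A.filter (fun y => σ₀ y ≤ σ₀ u)).card := rfl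
    omega
  set Wb : ℝ := ∑ σ : Equiv.Perm (Fin n),
    (if bad u S (List.ofFn fun i => σ.symm i) then φ ^ kendall σ σ₀ else 0) with hWbdef
  set Wg : ℝ := ∑ σ : Equiv.Perm (Fin n),
    (if bad u S (List.ofFn fun i => σ.symm i) then 0 else φ ^ kendall σ σ₀) with hWgdef
  have hWb0 : 0 ≤ Wb := Finset.sum_nonneg fun σ _ => by
    split_ifs
    · exact (pow_pos hφ0 _).le
    · exact le_rfl
  have hWg0 : 0 < Wg := by
    rw [hWgdef]
    apply Finset.sum_pos'
    · intro σ _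
      split_ifs
      · exact le_rfl
      · exact (pow_pos hφ0 _).le
    · refine ⟨σ₀, Finset.mem_univ σ₀, ?_⟩
      have hfalse : ¬ (bad u S (List.ofFn fun i => σ₀.symm i) = true) := by
        rw [bad_ofFn_iff σ₀ huS]
        rintro ⟨y, hy, hlt⟩
        exact absurd (hord y hy) (asymm hlt)
      rw [if_neg hfalse]
      exact pow_pos hφ0 _
  have hsymmbij : Function.Bijective (fun σ : Equiv.Perm (Fin n) => σ.symm) :=
    Function.Involutive.bijective (fun σ => Equiv.symm_symm σ)
  have hWbo : Wb = osum Finset.univ (fun l => if bad u S l then φ ^ linv σ₀ l else 0) := by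
    rw [osum_univ, ← Function.Bijective.sum_comp hsymmbij
      (fun e => if bad u S (List.ofFn fun i => e i) then φ ^ linv σ₀ (List.ofFn fun i => e i) else 0)]
    exact Finset.sum_congr rfl fun σ _ => by rw [kendall_eq_linv σ σ₀]
  have hWgo : Wg = osum Finset.univ (fun l => if bad u S l then 0 else φ ^ linv σ₀ l) := by
    rw [osum_univ, ← Function.Bijective.sum_comp hsymmbij
      (fun e => if bad u S (List.ofFn fun i => e i) then 0 else φ ^ linv σ₀ (List.ofFn fun i => e i))]
    exact Finset.sum_congr rfl fun σ _ => by rw [kendall_eq_linv σ σ₀]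
  have hkey : Wb ≤ phiSum φ 1 S.card * Wg := by
    rw [hWbo, hWgo]
    exact core σ₀ hφ0 hφ1.le Finset.univ u (Finset.mem_univ u) S (Finset.subset_univ S) huS hord
  have hZtot : (∑ σ : Equiv.Perm (Fin n), φ ^ kendall σ σ₀) = Wb + Wg := by
    rw [hWbdef, hWgdef, ← Finset.sum_add_distrib]
    refine Finset.sum_congr rfl fun σ _ => ?_
    split_ifs <;> simp
  have hZpos : 0 < Wb + Wg := by linarith
  have hP0 : 0 < phiSum φ 0 (A.card - proj σ₀ A u) := phiSum_zero_pos hφ0 _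
  constructor
  · have hnum : ∀ inst : (σ : Equiv.Perm (Fin n)) → Decidable (proj σ A u > proj σ₀ A u),
        (∑ σ : Equiv.Perm (Fin n),
        @ite _ (proj σ A u > proj σ₀ A u) (inst σ) (φ ^ kendall σ σ₀) 0) ≤ Wb := by
      intro inst
      rw [hWbdef]
      refine Finset.sum_le_sum fun σ _ => ?_
      by_cases hE : proj σ A u > proj σ₀ A u
      · rw [if_pos hE]
        obtain ⟨y, hy, hlt⟩ := event_imp σ σ₀ A u hE
        have hbadσ : bad u S (List.ofFn fun i => σ.symm i) = true :=
          (bad_ofFn_iff σ huS).2 ⟨y, hSdef ▸ hy, hlt⟩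
        rw [if_pos hbadσ]
      · rw [if_neg hE]
        split_ifs
        · exact (pow_pos hφ0 _).le
        · exact le_rfl
    have hfrac : Wb / (Wb + Wg) ≤ phiSum φ 1 S.card / phiSum φ 0 S.card := by
      rw [div_le_div_iff₀ hZpos (phiSum_zero_pos hφ0 _)]
      have hps := phiSum_zero_split φ S.card
      calc Wb * phiSum φ 0 S.card = Wb + Wb * phiSum φ 1 S.card := by rw [hps]; ring
        _ ≤ phiSum φ 1 S.card * Wg + Wb * phiSum φ 1 S.card := by linarith
        _ = phiSum φ 1 S.card * (Wb + Wg) := by ring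
    rw [hbcard] at hfrac
    unfold mallowsProb
    rw [hZtot]
    exact le_trans ((div_le_div_iff_of_pos_right hZpos).2 (hnum _)) hfrac
  · rw [div_lt_iff₀ hP0]
    have := phiSum_lt_mul hφ0 (A.card - proj σ₀ A u)
    linarith
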